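/- The range of the Sylvester factor 𝒮, viewed as a subset of ℝ (i.e., the set { 𝒮(n) : n ∈ ℕ, n ≥ 1 } ⊆ ℝ), is totally disconnected and has no isolated points (every point of the range is an accumulation point of the range). -/

import Mathlib

open Finset Filter

/-- The Sylvester factor `𝒮 n = ∏_{p ∣ n, p odd prime} (p-1)/(p-2)`. -/
noncomputable def sylvester (n : ℕ) : ℚ :=
  ∏ p ∈ n.primeFactors.erase 2, ((p : ℚ) - 1) / ((p : ℚ) - 2)

/-- The range of the Sylvester factor, viewed as a subset of `ℝ`. -/
noncomputable def sylvesterRange : Set ℝ :=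
  {x : ℝ | ∃ n : ℕ, 1 ≤ n ∧ ((sylvester n : ℚ) : ℝ) = x}

lemma sylvester_pos (n : ℕ) : 0 < sylvester n := by
  apply Finset.prod_pos
  intro p hp
  have hp2 : p ≠ 2 := (Finset.mem_erase.1 hp).1
  have hpp : p.Prime := Nat.prime_of_mem_primeFactors (Finset.mem_erase.1 hp).2
  have h3 : 3 ≤ p := by
    rcases hpp.two_le.lt_or_eq with h | h
    · omega
    · omega
  have h3' : (3 : ℚ) ≤ (p : ℚ) := by exact_mod_cast h3
  apply div_pos <;> linarith

lemma sylvester_mul_prime {n p : ℕ} (hn : n ≠ 0) (hp : p.Prime) (hp2 : p ≠ 2)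
    (hpn : ¬ p ∣ n) :
    sylvester (n * p) = sylvester n * (((p : ℚ) - 1) / ((p : ℚ) - 2)) := by
  have hfac : (n * p).primeFactors = insert p n.primeFactors := by
    rw [Nat.primeFactors_mul hn hp.ne_zero, Nat.Prime.primeFactors hp]
    rw [Finset.union_comm]
    rfl
  have hmem : p ∉ n.primeFactors.erase 2 := fun h =>
    hpn (Nat.dvd_of_mem_primeFactors (Finset.mem_of_mem_erase h))
  unfold sylvester
  rw [hfac, Finset.erase_insert_of_ne hp2, Finset.prod_insert hmem, mul_comm]

theorem sylvester_stmt17 :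
    IsTotallyDisconnected sylvesterRange ∧
    ∀ x ∈ sylvesterRange, AccPt x (𝓟 sylvesterRange) := by
  constructor
  · -- countable, hence totally disconnected
    have hcount : sylvesterRange.Countable := by
      have : sylvesterRange ⊆ Set.range ((↑) : ℚ → ℝ) := by
        rintro x ⟨n, -, rfl⟩; exact ⟨sylvester n, rfl⟩
      exact (Set.countable_range _).mono this
    intro t hts hcon
    intro x hx y hy
    by_contra hxy
    rcases lt_or_gt_of_ne hxy with h | h
    · have hsub : Set.Icc x y ⊆ t := hcon.Icc_subset hx hy
      have : (Set.Icc x y).Countable := (hcount.mono hts).mono hsub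
      have h1 := Cardinal.mk_Icc_real h
      have h2 := this.le_aleph0
      rw [h1] at h2
      exact absurd h2 (not_le.2 Cardinal.aleph0_lt_continuum)
    · have hsub : Set.Icc y x ⊆ t := hcon.Icc_subset hy hx
      have : (Set.Icc y x).Countable := (hcount.mono hts).mono hsub
      have h1 := Cardinal.mk_Icc_real h
      have h2 := this.le_aleph0
      rw [h1] at h2
      exact absurd h2 (not_le.2 Cardinal.aleph0_lt_continuum)
  · rintro x ⟨n, hn1, rfl⟩
    rw [accPt_iff_nhds]
    intro U hU
    set x : ℝ := ((sylvester n : ℚ) : ℝ) with hxdef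
    have hxpos : 0 < x := by rw [hxdef]; exact_mod_cast sylvester_pos n
    rcases Metric.mem_nhds_iff.1 hU with ⟨ε, hε, hball⟩
    -- choose a large prime
    obtain ⟨p, hpN, hpp⟩ := Nat.exists_infinite_primes (max (n + 1) (⌈x / ε⌉₊ + 3))
    have hpn : ¬ p ∣ n := by
      intro hdvd
      have := Nat.le_of_dvd (by omega) hdvd
      have := le_trans (le_max_left _ _) hpN
      omega
    have hp3 : 3 ≤ p := by
      have := le_trans (le_max_right _ _) hpN
      omega
    have hp2 : p ≠ 2 := by omega
    have hp3' : (3 : ℝ) ≤ (p : ℝ) := by exact_mod_cast hp3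
    set y : ℝ := ((sylvester (n * p) : ℚ) : ℝ) with hydef
    have hkey : y = x * (((p : ℝ) - 1) / ((p : ℝ) - 2)) := by
      rw [hydef, hxdef, sylvester_mul_prime (by omega) hpp hp2 hpn]
      push_cast
      ring
    have hden : (0 : ℝ) < (p : ℝ) - 2 := by linarith
    have hratio : (1 : ℝ) < ((p : ℝ) - 1) / ((p : ℝ) - 2) := by
      rw [lt_div_iff₀ hden]; linarith
    have hyx : y ≠ x := by
      rw [hkey]
      have : x < x * (((p : ℝ) - 1) / ((p : ℝ) - 2)) := by
        nlinarith
      exact this.ne'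
    have hdiff : y - x = x / ((p : ℝ) - 2) := by
      rw [hkey]; field_simp; ring
    have hbound : x / ((p : ℝ) - 2) < ε := by
      rw [div_lt_iff₀ hden]
      have hceil : x / ε ≤ (⌈x / ε⌉₊ : ℝ) := Nat.le_ceil _
      have hpge : ((⌈x / ε⌉₊ : ℕ) + 3 : ℕ) ≤ p := le_trans (le_max_right _ _) hpN
      have hpge' : ((⌈x / ε⌉₊ : ℝ) + 3) ≤ (p : ℝ) := by exact_mod_cast hpge
      have : x / ε < (p : ℝ) - 2 := by linarith
      calc x = (x / ε) * ε := by field_simp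
        _ < ((p : ℝ) - 2) * ε := by
            apply mul_lt_mul_of_pos_right this hε
        _ = ε * ((p : ℝ) - 2) := by ring
    refine ⟨y, ⟨?_, ⟨n * p, Nat.one_le_iff_ne_zero.mpr (Nat.mul_ne_zero (by omega) hpp.ne_zero), rfl⟩⟩, hyx⟩
    apply hball
    rw [Metric.mem_ball, Real.dist_eq, hdiff, abs_of_pos (by positivity)]
    exact hbound
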